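/- Define f(u) = (1−e^{−u})/√(1+(1−e^{−u})²) and g(u) = 2·artanh(√2·f(u)) − √2·artanh(f(u)). Then there exists a constant C > 0 such that |g(u) − u − (2·ln 2 − √2·ln(1+√2))| ≤ C·e^{−u} for all u ≥ 1. In particular, g(u) − u converges to 2·ln 2 − √2·ln(1+√2) as u → ∞. -/

import Mathlib

open Real

/-- The inverse hyperbolic tangent, `artanh x = (1/2) log ((1+x)/(1−x))`. -/
noncomputable def artanh (x : ℝ) : ℝ := (1 / 2) * Real.log ((1 + x) / (1 - x))

/-- `f u = (1−e^{−u})/√(1+(1−e^{−u})²)`. -/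
noncomputable def f (u : ℝ) : ℝ :=
  (1 - Real.exp (-u)) / Real.sqrt (1 + (1 - Real.exp (-u)) ^ 2)

/-- `g u = 2 artanh(√2 f u) − √2 artanh(f u)`, the geometric complexity of the
two-level reset map with `u = wτ`. -/
noncomputable def g (u : ℝ) : ℝ :=
  2 * _root_.artanh (Real.sqrt 2 * f u) - Real.sqrt 2 * _root_.artanh (f u)

lemma g_aux (a s r : ℝ) (ha0 : 0 < a) (ha1 : a < 1)
    (hs2 : s ^ 2 = 1 + a ^ 2) (hs0 : 0 < s)
    (hr2 : r ^ 2 = 2) (hr0 : 0 < r) :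
    2 * _root_.artanh (r * (a / s)) - r * _root_.artanh (a / s)
      = 2 * Real.log (s + r * a) - Real.log (1 - a ^ 2) - r * Real.log (s + a) := by
  have hsa : a < s := by nlinarith
  have hsra : r * a < s := by nlinarith [sq_nonneg (s - r*a), sq_nonneg (s + r*a)]
  have ha2 : 0 < 1 - a ^ 2 := by nlinarith
  have hprod1 : (s + a) * (s - a) = 1 := by linear_combination hs2
  have hprod2 : (s + r * a) * (s - r * a) = 1 - a ^ 2 := by
    linear_combination hs2 - a ^ 2 * hr2
  have hd1 : (0:ℝ) < 1 - a / s := by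
    have : a / s < 1 := (div_lt_one hs0).2 hsa
    linarith
  have hd2 : (0:ℝ) < 1 - r * (a / s) := by
    have : r * (a/s) < 1 := by rw [mul_div_assoc']; exact (div_lt_one hs0).2 hsra
    linarith
  have h1 : (1 + a / s) / (1 - a / s) = (s + a) ^ 2 := by
    rw [div_eq_iff hd1.ne']
    field_simp
    linear_combination (-1) * hprod1
  have h2 : (1 + r * (a / s)) / (1 - r * (a / s)) = (s + r * a) ^ 2 / (1 - a ^ 2) := by
    rw [div_eq_div_iff hd2.ne' ha2.ne']
    field_simp
    linear_combination (-1) * hprod2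
  unfold _root_.artanh
  rw [h1, h2, Real.log_div (by positivity) ha2.ne', Real.log_pow, Real.log_pow]
  push_cast
  ring

lemma g_eq (u : ℝ) (hu : 0 < u) :
    g u = 2 * Real.log (Real.sqrt (1+(1-Real.exp (-u))^2) + Real.sqrt 2 * (1-Real.exp (-u)))
        - Real.log (1-(1-Real.exp (-u))^2)
        - Real.sqrt 2 * Real.log (Real.sqrt (1+(1-Real.exp (-u))^2) + (1-Real.exp (-u))) := by
  have hε0 : 0 < Real.exp (-u) := Real.exp_pos _
  have hε1 : Real.exp (-u) < 1 := by rw [Real.exp_lt_one_iff]; linarith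
  have hfu : f u = (1 - Real.exp (-u)) / Real.sqrt (1 + (1 - Real.exp (-u)) ^ 2) := rfl
  have := g_aux (1 - Real.exp (-u)) (Real.sqrt (1 + (1 - Real.exp (-u)) ^ 2)) (Real.sqrt 2)
    (by linarith) (by linarith)
    (Real.sq_sqrt (by positivity)) (Real.sqrt_pos.2 (by positivity))
    (Real.sq_sqrt (by norm_num)) (Real.sqrt_pos.2 (by norm_num))
  rw [g, hfu]
  exact this

lemma log_diff_le {x y : ℝ} (hx : 1 ≤ x) (hy : 1 ≤ y) :
    |Real.log x - Real.log y| ≤ |x - y| := by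
  wlog h : y ≤ x with H
  · rw [abs_sub_comm, abs_sub_comm x y]; exact H hy hx (le_of_not_ge h)
  have hy0 : (0:ℝ) < y := by linarith
  have hx0 : (0:ℝ) < x := by linarith
  rw [abs_of_nonneg (sub_nonneg.2 (Real.log_le_log hy0 h)),
      abs_of_nonneg (sub_nonneg.2 h), ← Real.log_div hx0.ne' hy0.ne']
  have h1 : Real.log (x/y) ≤ x/y - 1 := Real.log_le_sub_one_of_pos (by positivity)
  have h2 : x/y - 1 ≤ x - y := by
    rw [div_sub_one hy0.ne']
    have := div_le_self (by linarith : (0:ℝ) ≤ x - y) hy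
    linarith
  linarith

set_option maxHeartbeats 1000000 in
lemma main_bound (u : ℝ) (hu : 1 ≤ u) :
    |g u - u - (2 * Real.log 2 - Real.sqrt 2 * Real.log (1 + Real.sqrt 2))| ≤
      12 * Real.exp (-u) := by
  have hu0 : 0 < u := by linarith
  set ε := Real.exp (-u) with hεdef
  have hε0 : 0 < ε := Real.exp_pos _
  have hεhalf : ε ≤ 1/2 := by
    have h1 : ε ≤ Real.exp (-1) := Real.exp_le_exp.2 (by linarith)
    have h2 : (2:ℝ) < Real.exp 1 := by
      have := Real.exp_one_gt_d9; linarith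
    rw [Real.exp_neg] at h1
    have hmul := mul_inv_cancel₀ (Real.exp_pos 1).ne'
    nlinarith [inv_nonneg.2 (Real.exp_pos 1).le]
  set a := 1 - ε with hadef
  set s := Real.sqrt (1 + a ^ 2) with hsdef
  set r := Real.sqrt 2 with hrdef
  have hs2 : s ^ 2 = 1 + a ^ 2 := Real.sq_sqrt (by positivity)
  have hs0 : 0 < s := Real.sqrt_pos.2 (by positivity)
  have hs1 : 1 ≤ s := by nlinarith
  have hr2 : r ^ 2 = 2 := Real.sq_sqrt (by norm_num)
  have hr0 : 0 < r := Real.sqrt_pos.2 (by norm_num)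
  have hr1 : 1 ≤ r := by nlinarith
  have hr15 : r ≤ 1.5 := by nlinarith
  have ha0 : 0 < a := by rw [hadef]; linarith
  have ha1 : a < 1 := by rw [hadef]; linarith
  -- |s - r| ≤ r * ε
  have lower : r * (1 - ε) ≤ s := by
    have e : r * (1 - ε) = Real.sqrt (2 * (1 - ε)^2) := by
      rw [Real.sqrt_mul (by norm_num), Real.sqrt_sq (by linarith)]
    rw [e, hsdef]
    apply Real.sqrt_le_sqrt
    rw [hadef]; nlinarith
  have upper : s ≤ r * (1 + ε) := by
    have e : r * (1 + ε) = Real.sqrt (2 * (1 + ε)^2) := by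
      rw [Real.sqrt_mul (by norm_num), Real.sqrt_sq (by linarith)]
    rw [e, hsdef]
    apply Real.sqrt_le_sqrt
    rw [hadef]; nlinarith
  -- rewrite g u
  have hgeq := g_eq u hu0
  rw [← hεdef, ← hadef, ← hsdef, ← hrdef] at hgeq
  have hloga2 : Real.log (1 - a ^ 2) = -u + Real.log (2 - ε) := by
    have e : 1 - a ^ 2 = ε * (2 - ε) := by rw [hadef]; ring
    rw [e, Real.log_mul hε0.ne' (by linarith), hεdef, Real.log_exp]
  have hlog2r : Real.log (2 * r) = (3/2 : ℝ) * Real.log 2 := by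
    rw [Real.log_mul (by norm_num) hr0.ne', hrdef, Real.log_sqrt (by norm_num)]
    ring
  clear_value ε
  clear_value a
  clear_value s
  clear_value r
  set A := Real.log (s + r * a) - Real.log (2 * r) with hAdef
  set B := Real.log (2 - ε) - Real.log 2 with hBdef
  set C := Real.log (s + a) - Real.log (1 + r) with hCdef
  have hrepr : g u - u - (2 * Real.log 2 - r * Real.log (1 + r)) = 2*A - B - r*C := by
    rw [hgeq, hloga2, hAdef, hBdef, hCdef]
    have : (2:ℝ) * Real.log (2 * r) = 3 * Real.log 2 := by rw [hlog2r]; ring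
    linarith [this]
  have hA : |A| ≤ 3 * ε := by
    refine le_trans (log_diff_le (by nlinarith) (by nlinarith)) ?_
    rw [abs_le]; constructor <;> nlinarith
  have hB : |B| ≤ ε := by
    refine le_trans (log_diff_le (by nlinarith) (by norm_num)) ?_
    rw [abs_le]; constructor <;> nlinarith
  have hC : |C| ≤ 2.5 * ε := by
    refine le_trans (log_diff_le (by nlinarith) (by nlinarith)) ?_
    rw [abs_le]; constructor <;> nlinarith
  rw [hrepr]
  have hA' := abs_le.1 hA
  have hB' := abs_le.1 hB
  have hC' := abs_le.1 hC
  rw [abs_le]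
  constructor <;> nlinarith [mul_le_mul_of_nonneg_left hC'.2 hr0.le,
    mul_le_mul_of_nonneg_left hC'.1 hr0.le, mul_nonneg (by linarith : (0:ℝ) ≤ 1.5 - r) hε0.le]


/-- **Asymptotics of the two-level complexity:**
`g u = u + 2 ln 2 − √2 ln(1+√2) + O(e^{−u})`, and in particular
`g u − u → 2 ln 2 − √2 ln(1+√2)` as `u → ∞`. -/
theorem two_level_complexity_asymptotics :
    (∃ C : ℝ, 0 < C ∧ ∀ u : ℝ, 1 ≤ u →
      |g u - u - (2 * Real.log 2 - Real.sqrt 2 * Real.log (1 + Real.sqrt 2))| ≤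
        C * Real.exp (-u)) ∧
    Filter.Tendsto (fun u => g u - u) Filter.atTop
      (nhds (2 * Real.log 2 - Real.sqrt 2 * Real.log (1 + Real.sqrt 2))) := by
  constructor
  · exact ⟨12, by norm_num, fun u hu => main_bound u hu⟩
  · rw [← tendsto_sub_nhds_zero_iff]
    have h0 : Filter.Tendsto (fun u : ℝ => 12 * Real.exp (-u)) Filter.atTop (nhds 0) := by
      have := Real.tendsto_exp_neg_atTop_nhds_zero
      simpa using this.const_mul (12:ℝ)
    apply squeeze_zero_norm' _ h0
    filter_upwards [Filter.eventually_ge_atTop (1:ℝ)] with u hu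
    simpa [Real.norm_eq_abs] using main_bound u hu
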